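/- Let Y₀ = (H₁ ∪ ⋯ ∪ H_c) ∩ (H_{c+1} ∪ ⋯ ∪ H_{c+d}) ⊂ ℙⁿ where H₁,…,H_{c+d} are coordinate hyperplanes from a basis, and let f: ℙ¹ → ℙⁿ be given by forms [φ₀ : ⋯ : φ_n] of degree e with all φᵢ ≠ 0. For p ∈ ℙ¹, the condition that f maps the length-a_p subscheme a_p·p into Y₀ is equivalent to: L_p^{a_p} divides ∏_{i∈I(p)} φᵢ and L_p^{a_p} divides ∏_{j∈J(p)} φ_j for some index sets I(p) ⊂ [1,c], J(p) ⊂ [c+1,c+d]; and this imposes exactly 2a_p independent linear-type conditions (codimension 2a_p) on the tuple (φ₀,…,φ_n). -/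

import Mathlib

/- STATEMENT 16: Y₀ = (H₁∪⋯∪H_c) ∩ (H_{c+1}∪⋯∪H_{c+d}) ⊆ ℙⁿ, f = [φ₀:⋯:φ_n] of
degree e with all φᵢ ≠ 0 (realized in the affine chart, so φᵢ ∈ k[X], deg ≤ e,
L_p = X − p).  Since Y₀ is cut out by (∏_{i<c} xᵢ, ∏_{c≤j<c+d} x_j), the condition
that f maps a·p into Y₀ is L_p^a ∣ ∏_{i<c} φᵢ and L_p^a ∣ ∏_{c≤j} φ_j, which is
equivalent to the same divisibilities over some index sets I ⊆ [1,c], J ⊆ [c+1,c+d];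
and the locus of such tuples (restricted to the relevant coordinates φ₁,…,φ_{c+d})
is a union of linear subspaces each of codimension exactly 2a in the
(c+d)(e+1)-dimensional space of tuples, i.e. of dimension (c+d)(e+1) − 2a. -/

open Polynomial Finset

noncomputable def ordPiece {k : Type*} [Field k] (cd e : ℕ) (p : k)
    (b : Fin cd → ℕ) : Submodule k (Fin cd → Polynomial k) :=
  Submodule.pi Set.univ fun i =>
    Polynomial.degreeLE k (e : WithBot ℕ) ⊓
      (Ideal.span {(X - C p) ^ (b i)}).restrictScalars k

-- truncation lemma
lemma trunc {ι : Type*} [DecidableEq ι] (s : Finset ι) (m : ι → ℕ) :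
    ∀ a : ℕ, a ≤ ∑ i ∈ s, m i →
    ∃ b : ι → ℕ, (∀ i, i ∉ s → b i = 0) ∧ (∀ i ∈ s, b i ≤ m i) ∧ ∑ i ∈ s, b i = a := by
  induction s using Finset.induction_on with
  | empty => intro a h; simp at h; exact ⟨0, by simp, by simp, by simp [h]⟩
  | @insert j s hj ih =>
    intro a h
    rw [Finset.sum_insert hj] at h
    by_cases hle : a ≤ ∑ i ∈ s, m i
    · obtain ⟨b, h0, hb, hs⟩ := ih a hle
      refine ⟨Function.update b j 0, fun i hi => ?_, fun i hi => ?_, ?_⟩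
      · rcases eq_or_ne i j with rfl | hij
        · simp
        · rw [Function.update_of_ne hij]; exact h0 i (fun h' => hi (Finset.mem_insert_of_mem h'))
      · rcases eq_or_ne i j with rfl | hij
        · simp
        · rw [Function.update_of_ne hij]; exact hb i ((Finset.mem_insert.mp hi).resolve_left hij)
      · rw [Finset.sum_insert hj, Function.update_self,
          Finset.sum_congr rfl (fun i hi => Function.update_of_ne (ne_of_mem_of_not_mem hi hj) _ _)]
        simpa using hs
    · obtain ⟨b, h0, hb, hs⟩ := ih (∑ i ∈ s, m i) le_rfl
      refine ⟨Function.update b j (a - ∑ i ∈ s, m i), fun i hi => ?_, fun i hi => ?_, ?_⟩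
      · rcases eq_or_ne i j with rfl | hij
        · exact absurd (Finset.mem_insert_self _ s) hi
        · rw [Function.update_of_ne hij]; exact h0 i (fun h' => hi (Finset.mem_insert_of_mem h'))
      · rcases eq_or_ne i j with rfl | hij
        · rw [Function.update_self]; omega
        · rw [Function.update_of_ne hij]; exact hb i ((Finset.mem_insert.mp hi).resolve_left hij)
      · rw [Finset.sum_insert hj, Function.update_self,
          Finset.sum_congr rfl (fun i hi => Function.update_of_ne (ne_of_mem_of_not_mem hi hj) _ _), hs]
        omega

-- rootMultiplicity of a product
lemma rm_prod {k : Type*} [Field k] {ι : Type*} (s : Finset ι) (φ : ι → Polynomial k)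
    (h : ∀ i ∈ s, φ i ≠ 0) (x : k) :
    rootMultiplicity x (∏ i ∈ s, φ i) = ∑ i ∈ s, rootMultiplicity x (φ i) := by
  classical
  induction s using Finset.induction_on with
  | empty => simp
  | @insert j s hj ih =>
    rw [Finset.prod_insert hj, Finset.sum_insert hj,
      rootMultiplicity_mul (mul_ne_zero (h j (Finset.mem_insert_self _ s))
        (Finset.prod_ne_zero_iff.mpr fun i hi => h i (Finset.mem_insert_of_mem hi))),
      ih (fun i hi => h i (Finset.mem_insert_of_mem hi))]

noncomputable def Vb {k : Type*} [Field k] (e b : ℕ) (p : k) : Submodule k (Polynomial k) :=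
  Polynomial.degreeLE k (e : WithBot ℕ) ⊓ (Ideal.span {(X - C p) ^ b}).restrictScalars k

lemma mem_Vb {k : Type*} [Field k] {e b : ℕ} {p : k} {q : Polynomial k} :
    q ∈ Vb e b p ↔ q.degree ≤ (e : WithBot ℕ) ∧ (X - C p) ^ b ∣ q := by
  simp [Vb, Polynomial.mem_degreeLE, Ideal.mem_span_singleton, Submodule.restrictScalars_mem]

noncomputable def VbEquiv {k : Type*} [Field k] (e b : ℕ) (hb : b ≤ e) (p : k) :
    Polynomial.degreeLT k (e + 1 - b) ≃ₗ[k] Vb e b p := by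
  refine LinearEquiv.ofBijective
    (LinearMap.codRestrict _ ((LinearMap.mulLeft k ((X - C p) ^ b)).comp
      (Submodule.subtype _)) ?_) ⟨?_, ?_⟩
  · rintro ⟨q, hq⟩
    rw [Polynomial.mem_degreeLT] at hq
    simp only [LinearMap.coe_comp, Submodule.coe_subtype, Function.comp_apply,
      LinearMap.mulLeft_apply]
    rw [mem_Vb]
    refine ⟨?_, dvd_mul_right _ _⟩
    rcases eq_or_ne q 0 with rfl | hq0
    · simp
    · have hprod : (X - C p) ^ b * q ≠ 0 :=
        mul_ne_zero (pow_ne_zero _ (X_sub_C_ne_zero p)) hq0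
      rw [← Polynomial.natDegree_le_iff_degree_le, natDegree_mul
        (pow_ne_zero _ (X_sub_C_ne_zero p)) hq0, natDegree_pow, natDegree_X_sub_C]
      have : q.natDegree < e + 1 - b :=
        (Polynomial.natDegree_lt_iff_degree_lt hq0).mpr hq
      omega
  · intro x y hxy
    have := congrArg Subtype.val hxy
    simp only [LinearMap.codRestrict_apply, LinearMap.coe_comp, Submodule.coe_subtype,
      Function.comp_apply, LinearMap.mulLeft_apply] at this
    exact Subtype.ext (mul_left_cancel₀ (pow_ne_zero _ (X_sub_C_ne_zero p)) this)
  · rintro ⟨φ, hφ⟩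
    rw [mem_Vb] at hφ
    obtain ⟨q, rfl⟩ := hφ.2
    have hq : q ∈ Polynomial.degreeLT k (e + 1 - b) := by
      rw [Polynomial.mem_degreeLT]
      rcases eq_or_ne q 0 with rfl | hq0
      · exact WithBot.bot_lt_coe _
      · have h1 := hφ.1
        rw [← Polynomial.natDegree_le_iff_degree_le, natDegree_mul
          (pow_ne_zero _ (X_sub_C_ne_zero p)) hq0, natDegree_pow, natDegree_X_sub_C] at h1
        exact (Polynomial.natDegree_lt_iff_degree_lt hq0).mp (by omega)
    exact ⟨⟨q, hq⟩, Subtype.ext rfl⟩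

lemma finrank_Vb {k : Type*} [Field k] (e b : ℕ) (hb : b ≤ e) (p : k) :
    Module.finrank k (Vb e b p) = e + 1 - b := by
  haveI : Module.Finite k (Polynomial.degreeLT k (e + 1 - b)) :=
    Module.Finite.equiv (Polynomial.degreeLTEquiv k (e + 1 - b)).symm
  rw [← (VbEquiv e b hb p).finrank_eq, (Polynomial.degreeLTEquiv k (e + 1 - b)).finrank_eq]
  simp [Module.finrank_pi]

-- pi submodule equiv
def piSubEquiv {k : Type*} [Field k] {ι : Type*} {M : ι → Type*} [∀ i, AddCommGroup (M i)]
    [∀ i, Module k (M i)] (V : ∀ i, Submodule k (M i)) :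
    (Submodule.pi Set.univ V) ≃ₗ[k] (∀ i, V i) where
  toFun x i := ⟨x.1 i, x.2 i (Set.mem_univ i)⟩
  map_add' x y := rfl
  map_smul' c x := rfl
  invFun y := ⟨fun i => y i, fun i _ => (y i).2⟩
  left_inv x := rfl
  right_inv y := rfl

lemma mem_ordPiece {k : Type*} [Field k] {cd e : ℕ} {p : k} {b : Fin cd → ℕ}
    {φ : Fin cd → Polynomial k} :
    φ ∈ ordPiece cd e p b ↔
      ∀ i, φ i ∈ Polynomial.degreeLE k (e : WithBot ℕ) ∧ (X - C p) ^ (b i) ∣ φ i := by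
  simp [ordPiece, Submodule.mem_pi, Submodule.mem_inf, Submodule.restrictScalars_mem,
    Ideal.mem_span_singleton]

theorem stmt16 {k : Type*} [Field k] (n c d e a : ℕ)
    (hc : 1 ≤ c) (hd : 1 ≤ d) (hcd : c + d ≤ n) (ha : 1 ≤ a) (hae : a ≤ e)
    (p : k) :
    -- (1) equivalence with the index-set formulation, for tuples of nonzero forms
    (∀ φ : Fin (c + d) → Polynomial k, (∀ i, φ i ≠ 0) →
      (((X - C p) ^ a ∣ ∏ i ∈ filter (fun i : Fin (c + d) => (i : ℕ) < c) univ, φ i ∧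
        (X - C p) ^ a ∣ ∏ i ∈ filter (fun i : Fin (c + d) => c ≤ (i : ℕ)) univ, φ i) ↔
       ∃ I J : Finset (Fin (c + d)),
         (∀ i ∈ I, (i : ℕ) < c) ∧ (∀ j ∈ J, c ≤ (j : ℕ)) ∧
         (X - C p) ^ a ∣ ∏ i ∈ I, φ i ∧ (X - C p) ^ a ∣ ∏ j ∈ J, φ j)) ∧
    -- (2) the locus is a union of linear subspaces ...
    ({φ : Fin (c + d) → Polynomial k |
        (∀ i, φ i ∈ Polynomial.degreeLE k (e : WithBot ℕ)) ∧
        (X - C p) ^ a ∣ ∏ i ∈ filter (fun i : Fin (c + d) => (i : ℕ) < c) univ, φ i ∧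
        (X - C p) ^ a ∣ ∏ i ∈ filter (fun i : Fin (c + d) => c ≤ (i : ℕ)) univ, φ i} =
      ⋃ b ∈ {b : Fin (c + d) → ℕ |
          ∑ i ∈ filter (fun i : Fin (c + d) => (i : ℕ) < c) univ, b i = a ∧
          ∑ i ∈ filter (fun i : Fin (c + d) => c ≤ (i : ℕ)) univ, b i = a},
        (ordPiece (c + d) e p b : Set (Fin (c + d) → Polynomial k))) ∧
    -- (3) ... each of codimension exactly 2a
    (∀ b : Fin (c + d) → ℕ,
      ∑ i ∈ filter (fun i : Fin (c + d) => (i : ℕ) < c) univ, b i = a →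
      ∑ i ∈ filter (fun i : Fin (c + d) => c ≤ (i : ℕ)) univ, b i = a →
      Module.finrank k (ordPiece (c + d) e p b) = (c + d) * (e + 1) - 2 * a) := by
  classical
  refine ⟨?_, ?_, ?_⟩
  -- (1)
  · intro φ hφ
    constructor
    · rintro ⟨h1, h2⟩
      exact ⟨_, _, fun i hi => (mem_filter.mp hi).2, fun j hj => (mem_filter.mp hj).2, h1, h2⟩
    · rintro ⟨I, J, hI, hJ, h1, h2⟩
      exact ⟨h1.trans (Finset.prod_dvd_prod_of_subset I _ φ
          (fun i hi => mem_filter.mpr ⟨mem_univ _, hI i hi⟩)),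
        h2.trans (Finset.prod_dvd_prod_of_subset J _ φ
          (fun j hj => mem_filter.mpr ⟨mem_univ _, hJ j hj⟩))⟩
  -- (2)
  · ext φ
    simp only [Set.mem_setOf_eq, Set.mem_iUnion, SetLike.mem_coe, exists_prop]
    constructor
    · rintro ⟨hdeg, h1, h2⟩
      set m : Fin (c + d) → ℕ := fun i => if φ i = 0 then a else rootMultiplicity p (φ i)
        with hm
      have key : ∀ s : Finset (Fin (c + d)), (X - C p) ^ a ∣ ∏ i ∈ s, φ i →
          a ≤ ∑ i ∈ s, m i := by
        intro s hs
        by_cases hz : ∀ i ∈ s, φ i ≠ 0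
        · have h0 : ∏ i ∈ s, φ i ≠ 0 := Finset.prod_ne_zero_iff.mpr hz
          have hle := (le_rootMultiplicity_iff h0).mpr hs
          rw [rm_prod s φ hz p] at hle
          exact hle.trans (Finset.sum_le_sum fun i hi => by simp [hm, hz i hi])
        · push_neg at hz
          obtain ⟨i, hi, hzi⟩ := hz
          have : m i = a := by simp [hm, hzi]
          calc a = m i := this.symm
            _ ≤ _ := Finset.single_le_sum (fun j _ => Nat.zero_le _) hi
      obtain ⟨b₁, hb₁0, hb₁le, hb₁s⟩ := trunc _ m a (key _ h1)
      obtain ⟨b₂, hb₂0, hb₂le, hb₂s⟩ := trunc _ m a (key _ h2)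
      have hnot1 : ∀ i : Fin (c + d), (i : ℕ) < c → b₂ i = 0 := fun i hi =>
        hb₂0 i (by simp; omega)
      have hnot2 : ∀ i : Fin (c + d), c ≤ (i : ℕ) → b₁ i = 0 := fun i hi =>
        hb₁0 i (by simp; omega)
      refine ⟨b₁ + b₂, ⟨?_, ?_⟩, ?_⟩
      · rw [Finset.sum_congr rfl (fun i hi => show (b₁ + b₂) i = b₁ i by
          have := hnot1 i (mem_filter.mp hi).2; simp [this])]
        exact hb₁s
      · rw [Finset.sum_congr rfl (fun i hi => show (b₁ + b₂) i = b₂ i by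
          have := hnot2 i (mem_filter.mp hi).2; simp [this])]
        exact hb₂s
      · rw [mem_ordPiece]
        intro i
        refine ⟨hdeg i, ?_⟩
        rcases eq_or_ne (φ i) 0 with hzi | hzi
        · simp [hzi]
        · have hle : (b₁ + b₂) i ≤ rootMultiplicity p (φ i) := by
            rcases lt_or_ge (i : ℕ) c with hi | hi
            · have h2' := hnot1 i hi
              have h1' := hb₁le i (by simp [hi])
              simp only [Pi.add_apply, h2', add_zero]
              simpa [hm, hzi] using h1'
            · have h2' := hnot2 i hi
              have h1' := hb₂le i (by simp [hi])
              simp only [Pi.add_apply, h2', zero_add]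
              simpa [hm, hzi] using h1'
          exact (pow_dvd_pow _ hle).trans (pow_rootMultiplicity_dvd (φ i) p)
    · rintro ⟨b, ⟨hb1, hb2⟩, hmem⟩
      rw [mem_ordPiece] at hmem
      refine ⟨fun i => (hmem i).1, ?_, ?_⟩
      · have := Finset.prod_dvd_prod_of_dvd (fun i => (X - C p) ^ (b i)) φ
          (fun i _ => (hmem i).2) (s := filter (fun i : Fin (c + d) => (i : ℕ) < c) univ)
        rwa [Finset.prod_pow_eq_pow_sum, hb1] at this
      · have := Finset.prod_dvd_prod_of_dvd (fun i => (X - C p) ^ (b i)) φ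
          (fun i _ => (hmem i).2) (s := filter (fun i : Fin (c + d) => c ≤ (i : ℕ)) univ)
        rwa [Finset.prod_pow_eq_pow_sum, hb2] at this
  -- (3)
  · intro b hb1 hb2
    have hble : ∀ i, b i ≤ e := by
      intro i
      rcases lt_or_ge (i : ℕ) c with hi | hi
      · have := Finset.single_le_sum (f := b) (fun j _ => Nat.zero_le _)
          (show i ∈ filter (fun i : Fin (c + d) => (i : ℕ) < c) univ by simp [hi])
        omega
      · have := Finset.single_le_sum (f := b) (fun j _ => Nat.zero_le _)
          (show i ∈ filter (fun i : Fin (c + d) => c ≤ (i : ℕ)) univ by simp [hi])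
        omega
    have heq : ordPiece (c + d) e p b = Submodule.pi Set.univ (fun i => Vb e (b i) p) := rfl
    haveI : ∀ i : Fin (c + d), Module.Finite k (Vb e (b i) p) := fun i => by
      haveI : Module.Finite k (Polynomial.degreeLT k (e + 1 - b i)) :=
        Module.Finite.equiv (Polynomial.degreeLTEquiv k (e + 1 - b i)).symm
      exact Module.Finite.equiv (VbEquiv e (b i) (hble i) p)
    rw [heq, (piSubEquiv (fun i => Vb e (b i) p)).finrank_eq, Module.finrank_pi_fintype]
    have hfr : ∀ i : Fin (c + d), Module.finrank k (Vb e (b i) p) = (e + 1) - b i := fun i =>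
      finrank_Vb e (b i) (hble i) p
    rw [Finset.sum_congr rfl (fun i _ => hfr i),
      Finset.sum_tsub_distrib _ (fun i _ => by have := hble i; omega)]
    have hsum : ∑ i : Fin (c + d), b i = 2 * a := by
      rw [← Finset.sum_filter_add_sum_filter_not univ (fun i : Fin (c + d) => (i : ℕ) < c) b,
        hb1, Finset.filter_congr (fun i _ => by rw [not_lt]), hb2]
      omega
    rw [hsum]
    simp [Finset.sum_const, mul_comm]
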